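/- arXiv:2312.07265 — 7 statements merged into one kernel-verified Lean document; each statement's English description precedes it below -/
import Mathlib

section
/- Let (u_n) be a sequence of square-integrable functions ℝ² → ℝ converging pointwise almost everywhere to a square-integrable function u : ℝ² → ℝ with ∫_{ℝ²} u² dx > 0. Let (v_n) be a sequence of square-integrable functions ℝ² → ℝ such that sup_n ∫_{ℝ²} v_n² dx < ∞ and sup_n ∬_{ℝ²×ℝ²} log(1+‖x−y‖)·u_n(x)²v_n(y)² dxdy < ∞. Then there exist n₀ ∈ ℕ and C > 0 such that ∫_{ℝ²} log(1+‖x‖)·v_n(x)² dx < C for all n ≥ n₀. -/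
open MeasureTheory Filter
open scoped ENNReal

abbrev E2 := EuclideanSpace ℝ (Fin 2)

lemma loghalf {R t s : ℝ} (hR : 0 ≤ R) (ht : 2*R + 2 ≤ t) (hs : t - R ≤ s) :
    2⁻¹ * Real.log (1 + t) ≤ Real.log (1 + s) := by
  have h1 : (0:ℝ) < 1 + t := by linarith
  have key : 1 + t ≤ (1 + s)^2 := by nlinarith
  have h2 := Real.log_le_log h1 key
  rw [Real.log_pow] at h2
  push_cast at h2
  linarith

/-- Lemma 2.2 (first part): uniform boundedness of the weighted norms `|vₙ|_*`. -/
theorem stmt2 (u : ℕ → E2 → ℝ) (u₀ : E2 → ℝ)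
    (hu : ∀ n, MemLp (u n) 2 (volume : Measure E2))
    (hu₀ : MemLp u₀ 2 (volume : Measure E2))
    (hu₀pos : 0 < ∫ x : E2, (u₀ x) ^ 2)
    (hae : ∀ᵐ x : E2, Tendsto (fun n => u n x) atTop (nhds (u₀ x)))
    (v : ℕ → E2 → ℝ) (hv : ∀ n, MemLp (v n) 2 (volume : Measure E2))
    (hvbd : ∃ A : ℝ, ∀ n, (∫ x : E2, (v n x) ^ 2) ≤ A)
    (hB : (⨆ n, ∫⁻ z : E2 × E2,
        ENNReal.ofReal (Real.log (1 + ‖z.1 - z.2‖) * (u n z.1) ^ 2 * (v n z.2) ^ 2)) < ⊤) :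
    ∃ n₀ : ℕ, ∃ C : ℝ, 0 < C ∧ ∀ n ≥ n₀,
      (∫⁻ x : E2, ENNReal.ofReal (Real.log (1 + ‖x‖) * (v n x) ^ 2)) <
        ENNReal.ofReal C := by
  classical
  obtain ⟨A, hA⟩ := hvbd
  set B := (⨆ n, ∫⁻ z : E2 × E2,
      ENNReal.ofReal (Real.log (1 + ‖z.1 - z.2‖) * (u n z.1) ^ 2 * (v n z.2) ^ 2)) with hBdef
  set f : ℕ → E2 → ℝ≥0∞ := fun n x => ENNReal.ofReal ((u n x) ^ 2) with hfdef
  set f₀ : E2 → ℝ≥0∞ := fun x => ENNReal.ofReal ((u₀ x) ^ 2) with hf0def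
  set g : ℕ → E2 → ℝ≥0∞ := fun n x => ENNReal.ofReal ((v n x) ^ 2) with hgdef
  set w : E2 → ℝ≥0∞ := fun x => ENNReal.ofReal (Real.log (1 + ‖x‖)) with hwdef
  have hfm : ∀ n, AEMeasurable (f n) (volume : Measure E2) := fun n =>
    ((hu n).1.aemeasurable.pow_const 2).ennreal_ofReal
  have hgm : ∀ n, AEMeasurable (g n) (volume : Measure E2) := fun n =>
    ((hv n).1.aemeasurable.pow_const 2).ennreal_ofReal
  have hwm : Measurable w :=
    ENNReal.measurable_ofReal.comp (Real.measurable_log.comp (measurable_const.add measurable_norm))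
  have hgint : ∀ n, ∫⁻ x, g n x ≤ ENNReal.ofReal A := by
    intro n
    have hi : Integrable (fun x => (v n x) ^ 2) := (hv n).integrable_sq
    rw [hgdef, ← ofReal_integral_eq_lintegral_ofReal hi (Eventually.of_forall fun x => sq_nonneg _)]
    exact ENNReal.ofReal_le_ofReal (hA n)
  have hf0int : ∫⁻ x, f₀ x < ⊤ := hu₀.integrable_sq.lintegral_lt_top
  have hpos : 0 < ∫⁻ x, f₀ x := by
    rw [hf0def, ← ofReal_integral_eq_lintegral_ofReal hu₀.integrable_sq
      (Eventually.of_forall fun x => sq_nonneg _)]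
    exact ENNReal.ofReal_pos.2 hu₀pos
  obtain ⟨R, hRpos⟩ : ∃ R : ℕ, 0 < ∫⁻ x in Metric.ball (0:E2) R, f₀ x := by
    by_contra h
    push_neg at h
    have hz : ∀ R : ℕ, (volume.withDensity f₀) (Metric.ball (0:E2) R) = 0 := by
      intro R
      rw [withDensity_apply _ measurableSet_ball]
      exact le_antisymm (h R) (zero_le)
    have huniv : (volume.withDensity f₀) Set.univ = 0 := by
      rw [← Metric.iUnion_ball_nat (0:E2)]
      exact measure_iUnion_null hz
    rw [withDensity_apply _ MeasurableSet.univ, Measure.restrict_univ] at huniv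
    exact absurd huniv hpos.ne'
  set δ := ∫⁻ x in Metric.ball (0:E2) R, f₀ x with hδdef
  have hδtop : δ < ⊤ := lt_of_le_of_lt (setLIntegral_le_lintegral _ _) hf0int
  have hliminf : δ ≤ liminf (fun n => ∫⁻ x in Metric.ball (0:E2) R, f n x) atTop := by
    have hfa : ∀ᵐ x : E2, liminf (fun n => f n x) atTop = f₀ x := by
      filter_upwards [hae] with x hx
      exact (ENNReal.tendsto_ofReal (hx.pow 2)).liminf_eq
    calc δ = ∫⁻ x in Metric.ball (0:E2) R, liminf (fun n => f n x) atTop :=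
        (lintegral_congr_ae (ae_restrict_of_ae hfa)).symm
      _ ≤ _ := lintegral_liminf_le' (fun n => (hfm n).restrict)
  have hev : ∀ᶠ n in atTop, δ / 2 < ∫⁻ x in Metric.ball (0:E2) R, f n x :=
    eventually_lt_of_lt_liminf
      (lt_of_lt_of_le (ENNReal.half_lt_self hRpos.ne' hδtop.ne) hliminf)
  obtain ⟨n₀, hn₀⟩ := eventually_atTop.1 hev
  set M : ℝ := 2 * (R:ℝ) + 2 with hMdef
  set T : ℕ → ℝ≥0∞ := fun n => ∫⁻ y in (Metric.ball (0:E2) M)ᶜ, w y * g n y with hTdef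
  -- key estimate
  have hkey : ∀ n, n₀ ≤ n → (δ/2) * (ENNReal.ofReal 2⁻¹ * T n) ≤ B := by
    intro n hn
    set S := Metric.ball (0:E2) (R:ℝ) ×ˢ (Metric.ball (0:E2) M)ᶜ with hSdef
    have hSm : MeasurableSet S :=
      measurableSet_ball.prod measurableSet_ball.compl
    have hle1 : ∀ z : E2 × E2, z ∈ S →
        f n z.1 * (ENNReal.ofReal 2⁻¹ * (w z.2 * g n z.2)) ≤
        ENNReal.ofReal (Real.log (1 + ‖z.1 - z.2‖) * (u n z.1) ^ 2 * (v n z.2) ^ 2) := by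
      rintro ⟨x, y⟩ ⟨hx, hy⟩
      have hxR : ‖x‖ < R := by simpa [Metric.mem_ball, dist_zero_right] using hx
      have hyM : M ≤ ‖y‖ := by
        simp only [Set.mem_compl_iff, Metric.mem_ball, dist_zero_right, not_lt] at hy
        exact hy
      have hsub : ‖y‖ - (R:ℝ) ≤ ‖x - y‖ := by
        have h1 : ‖y‖ - ‖x‖ ≤ ‖y - x‖ := norm_sub_norm_le _ _
        rw [norm_sub_rev] at h1
        linarith
      have hlog : 2⁻¹ * Real.log (1 + ‖y‖) ≤ Real.log (1 + ‖x - y‖) :=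
        loghalf (by positivity) hyM hsub
      have hlnn : 0 ≤ Real.log (1 + ‖x - y‖) :=
        Real.log_nonneg (by linarith [norm_nonneg (x - y)])
      have hkey2 : ENNReal.ofReal 2⁻¹ * w y ≤ ENNReal.ofReal (Real.log (1 + ‖x - y‖)) := by
        rw [hwdef, ← ENNReal.ofReal_mul (by norm_num)]
        exact ENNReal.ofReal_le_ofReal hlog
      calc f n x * (ENNReal.ofReal 2⁻¹ * (w y * g n y))
          = (ENNReal.ofReal 2⁻¹ * w y) * (f n x * g n y) := by ring
        _ ≤ ENNReal.ofReal (Real.log (1 + ‖x - y‖)) * (f n x * g n y) :=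
            mul_le_mul' hkey2 le_rfl
        _ = ENNReal.ofReal (Real.log (1 + ‖x - y‖) * (u n x) ^ 2 * (v n y) ^ 2) := by
            rw [ENNReal.ofReal_mul (by positivity), ENNReal.ofReal_mul hlnn, mul_assoc]
    have hprod :
        (∫⁻ x in Metric.ball (0:E2) (R:ℝ), f n x) *
          (∫⁻ y in (Metric.ball (0:E2) M)ᶜ, ENNReal.ofReal 2⁻¹ * (w y * g n y))
        = ∫⁻ z in S, f n z.1 * (ENNReal.ofReal 2⁻¹ * (w z.2 * g n z.2)) := by
      rw [hSdef, Measure.volume_eq_prod, ← Measure.prod_restrict,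
        lintegral_prod_mul (f := f n) (g := fun y => ENNReal.ofReal 2⁻¹ * (w y * g n y)) ((hfm n).restrict)
          ((aemeasurable_const.mul (hwm.aemeasurable.mul (hgm n))).restrict)]
    have hconst : ∫⁻ y in (Metric.ball (0:E2) M)ᶜ, ENNReal.ofReal 2⁻¹ * (w y * g n y)
        = ENNReal.ofReal 2⁻¹ * T n := by
      rw [hTdef]
      exact lintegral_const_mul' _ _ ENNReal.ofReal_ne_top
    calc (δ/2) * (ENNReal.ofReal 2⁻¹ * T n)
        ≤ (∫⁻ x in Metric.ball (0:E2) (R:ℝ), f n x) * (ENNReal.ofReal 2⁻¹ * T n) :=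
          mul_le_mul' (hn₀ n hn).le le_rfl
      _ = ∫⁻ z in S, f n z.1 * (ENNReal.ofReal 2⁻¹ * (w z.2 * g n z.2)) := by
          rw [← hconst, hprod]
      _ ≤ ∫⁻ z in S,
            ENNReal.ofReal (Real.log (1 + ‖z.1 - z.2‖) * (u n z.1) ^ 2 * (v n z.2) ^ 2) := by
          apply lintegral_mono_ae
          rw [ae_restrict_iff' hSm]
          exact Eventually.of_forall hle1
      _ ≤ ∫⁻ z : E2 × E2,
            ENNReal.ofReal (Real.log (1 + ‖z.1 - z.2‖) * (u n z.1) ^ 2 * (v n z.2) ^ 2) :=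
          setLIntegral_le_lintegral _ _
      _ ≤ B := by rw [hBdef]; exact le_iSup (fun n => ∫⁻ z : E2 × E2, ENNReal.ofReal (Real.log (1 + ‖z.1 - z.2‖) * (u n z.1) ^ 2 * (v n z.2) ^ 2)) n
  -- conclude
  set a : ℝ≥0∞ := δ/2 * ENNReal.ofReal 2⁻¹ with hadef
  have ha0 : a ≠ 0 := by
    apply mul_ne_zero
    · simp [ENNReal.div_eq_zero_iff, hRpos.ne']
    · simp [ENNReal.ofReal_eq_zero]
  have hT : ∀ n, n₀ ≤ n → T n ≤ B / a := by
    intro n hn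
    rw [ENNReal.le_div_iff_mul_le (Or.inl ha0)
      (Or.inl (ENNReal.mul_ne_top (ENNReal.div_lt_top hδtop.ne (by norm_num)).ne ENNReal.ofReal_ne_top))]
    calc T n * a = (δ/2) * (ENNReal.ofReal 2⁻¹ * T n) := by rw [hadef]; ring
      _ ≤ B := hkey n hn
  set K : ℝ≥0∞ := ENNReal.ofReal (Real.log (1 + M)) * ENNReal.ofReal A + B / a with hKdef
  have hKtop : K ≠ ⊤ := by
    apply ENNReal.add_ne_top.2
    exact ⟨ENNReal.mul_ne_top ENNReal.ofReal_ne_top ENNReal.ofReal_ne_top,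
      (ENNReal.div_lt_top hB.ne ha0).ne⟩
  refine ⟨n₀, K.toReal + 1, by positivity, fun n hn => ?_⟩
  have hsplit : (∫⁻ x : E2, ENNReal.ofReal (Real.log (1 + ‖x‖) * (v n x) ^ 2))
      = ∫⁻ x, w x * g n x := by
    apply lintegral_congr fun x => ?_
    rw [hwdef, hgdef, ← ENNReal.ofReal_mul (Real.log_nonneg (by linarith [norm_nonneg x]))]
  have h1 : ∫⁻ x in Metric.ball (0:E2) M, w x * g n x
      ≤ ENNReal.ofReal (Real.log (1 + M)) * ENNReal.ofReal A := by
    calc ∫⁻ x in Metric.ball (0:E2) M, w x * g n x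
        ≤ ∫⁻ x in Metric.ball (0:E2) M, ENNReal.ofReal (Real.log (1 + M)) * g n x := by
          apply lintegral_mono_ae
          rw [ae_restrict_iff' measurableSet_ball]
          refine Eventually.of_forall fun x hx => ?_
          have hxM : ‖x‖ ≤ M := by
            have := hx
            rw [Metric.mem_ball, dist_zero_right] at this
            linarith
          refine mul_le_mul' ?_ le_rfl
          exact ENNReal.ofReal_le_ofReal
            (Real.log_le_log (by positivity) (by linarith))
      _ = ENNReal.ofReal (Real.log (1 + M)) * ∫⁻ x in Metric.ball (0:E2) M, g n x :=
          lintegral_const_mul' _ _ ENNReal.ofReal_ne_top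
      _ ≤ ENNReal.ofReal (Real.log (1 + M)) * ENNReal.ofReal A :=
          mul_le_mul' le_rfl (le_trans (setLIntegral_le_lintegral _ _) (hgint n))
  calc (∫⁻ x : E2, ENNReal.ofReal (Real.log (1 + ‖x‖) * (v n x) ^ 2))
      = (∫⁻ x in Metric.ball (0:E2) M, w x * g n x) + T n := by
        rw [hsplit, hTdef, ← lintegral_add_compl (fun x => w x * g n x) measurableSet_ball]
    _ ≤ K := add_le_add h1 (hT n hn)
    _ < ENNReal.ofReal (K.toReal + 1) := by
        rw [ENNReal.ofReal_add ENNReal.toReal_nonneg zero_le_one,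
          ENNReal.ofReal_toReal hKtop, ENNReal.ofReal_one]
        exact ENNReal.lt_add_right hKtop one_ne_zero
end

section
/- Let (u_n) be a sequence of square-integrable functions ℝ² → ℝ converging pointwise almost everywhere to a square-integrable function u : ℝ² → ℝ with ∫_{ℝ²} u² dx > 0. Let (v_n) be a sequence of square-integrable functions ℝ² → ℝ such that sup_n ∫_{ℝ²} v_n² dx < ∞ and sup_n ∬_{ℝ²×ℝ²} log(1+‖x−y‖)·u_n(x)²v_n(y)² dxdy < ∞. If moreover ∬_{ℝ²×ℝ²} log(1+‖x−y‖)·u_n(x)²v_n(y)² dxdy → 0 and ∫_{ℝ²} v_n² dx → 0 as n → ∞, then ∫_{ℝ²} log(1+‖x‖)·v_n(x)² dx → 0 as n → ∞. -/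
open MeasureTheory Filter

private lemma log_split (x y : E2) (R : ℝ) (hx : ‖x‖ ≤ R) :
    Real.log (1 + ‖y‖) ≤ Real.log (1 + R) + Real.log (1 + ‖x - y‖) := by
  have hR : 0 ≤ R := (norm_nonneg x).trans hx
  have h1 : (0:ℝ) < 1 + R := by linarith
  have h2 : (0:ℝ) < 1 + ‖x - y‖ := by linarith [norm_nonneg (x - y)]
  have h3 : ‖y‖ ≤ ‖x‖ + ‖x - y‖ := by
    have h5 := norm_sub_norm_le y x
    have h4 : ‖y - x‖ = ‖x - y‖ := norm_sub_rev y x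
    linarith
  have hle : 1 + ‖y‖ ≤ (1 + R) * (1 + ‖x - y‖) := by nlinarith [norm_nonneg (x - y)]
  calc Real.log (1 + ‖y‖) ≤ Real.log ((1 + R) * (1 + ‖x - y‖)) :=
        Real.log_le_log (by linarith [norm_nonneg y]) hle
    _ = _ := Real.log_mul h1.ne' h2.ne'

/-- Lemma 2.2 (second part): if moreover `B₁(uₙ², vₙ²) → 0` and `|vₙ|₂ → 0`,
then the weighted norms `|vₙ|_*` tend to zero. -/
theorem stmt3 (u : ℕ → E2 → ℝ) (u₀ : E2 → ℝ)
    (hu : ∀ n, MemLp (u n) 2 (volume : Measure E2))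
    (hu₀ : MemLp u₀ 2 (volume : Measure E2))
    (hu₀pos : 0 < ∫ x : E2, (u₀ x) ^ 2)
    (hae : ∀ᵐ x : E2, Tendsto (fun n => u n x) atTop (nhds (u₀ x)))
    (v : ℕ → E2 → ℝ) (hv : ∀ n, MemLp (v n) 2 (volume : Measure E2))
    (hvbd : ∃ A : ℝ, ∀ n, (∫ x : E2, (v n x) ^ 2) ≤ A)
    (hB : (⨆ n, ∫⁻ z : E2 × E2,
        ENNReal.ofReal (Real.log (1 + ‖z.1 - z.2‖) * (u n z.1) ^ 2 * (v n z.2) ^ 2)) < ⊤)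
    (hB0 : Tendsto (fun n => ∫⁻ z : E2 × E2,
        ENNReal.ofReal (Real.log (1 + ‖z.1 - z.2‖) * (u n z.1) ^ 2 * (v n z.2) ^ 2))
      atTop (nhds 0))
    (hv0 : Tendsto (fun n => ∫ x : E2, (v n x) ^ 2) atTop (nhds 0)) :
    Tendsto (fun n => ∫⁻ x : E2, ENNReal.ofReal (Real.log (1 + ‖x‖) * (v n x) ^ 2))
      atTop (nhds 0) := by
  classical
  -- measurable representatives
  set g : E2 → ℝ := hu₀.1.mk u₀ with hgdef
  have hgm : StronglyMeasurable g := hu₀.1.stronglyMeasurable_mk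
  have hg_eq : u₀ =ᵐ[volume] g := hu₀.1.ae_eq_mk
  set u' : ℕ → E2 → ℝ := fun n => (hu n).1.mk (u n) with hu'def
  have hu'm : ∀ n, StronglyMeasurable (u' n) := fun n => (hu n).1.stronglyMeasurable_mk
  have hu'_eq : ∀ n, u n =ᵐ[volume] u' n := fun n => (hu n).1.ae_eq_mk
  have htend : ∀ᵐ x : E2, Tendsto (fun n => u' n x) atTop (nhds (g x)) := by
    filter_upwards [hae, hg_eq, ae_all_iff.2 hu'_eq] with x hx h1 h2
    exact h1 ▸ hx.congr h2
  -- the set where g is nonzero has positive measure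
  have hgne : 0 < volume {x : E2 | g x ≠ 0} := by
    rcases eq_zero_or_pos (volume {x : E2 | g x ≠ 0}) with h | h
    · exfalso
      have hg0 : g =ᵐ[volume] 0 := by
        rw [Filter.EventuallyEq, ae_iff]
        simpa using h
      have h1 : u₀ =ᵐ[volume] 0 := hg_eq.trans hg0
      have h2 : (fun x : E2 => (u₀ x) ^ 2) =ᵐ[volume] 0 := by
        filter_upwards [h1] with x hx
        simp [hx]
      rw [integral_congr_ae h2] at hu₀pos
      simp at hu₀pos
    · exact h
  -- find a good set of positive finite measure
  set S : ℕ → Set E2 := fun k =>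
    Metric.closedBall (0:E2) k ∩ {x | ((k:ℝ) + 1)⁻¹ ≤ |g x| ∧ |g x| ≤ (k:ℝ) + 1} with hSdef
  have hSmeas : ∀ k, MeasurableSet (S k) := fun k =>
    measurableSet_closedBall.inter
      ((measurableSet_le measurable_const hgm.measurable.abs).inter
        (measurableSet_le hgm.measurable.abs measurable_const))
  have hcover : {x : E2 | g x ≠ 0} ⊆ ⋃ k, S k := by
    intro x hx
    have hgx : 0 < |g x| := abs_pos.2 hx
    obtain ⟨k, hk⟩ := exists_nat_ge (max (max ‖x‖ |g x|) (|g x|)⁻¹)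
    refine Set.mem_iUnion.2 ⟨k, ?_, ?_, ?_⟩
    · rw [mem_closedBall_zero_iff]
      exact le_trans (le_trans (le_max_left _ _) (le_max_left _ _)) hk
    · have h1 : (|g x|)⁻¹ ≤ (k:ℝ) + 1 := by
        have := le_trans (le_max_right _ _) hk; linarith
      have := inv_anti₀ (inv_pos.2 hgx) h1
      rwa [inv_inv] at this
    · have := le_trans (le_trans (le_max_right _ _) (le_max_left _ _)) hk
      linarith
  have hex : ∃ k, 0 < volume (S k) := by
    by_contra h
    push_neg at h
    have h0 : volume (⋃ k, S k) = 0 :=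
      measure_iUnion_null fun k => le_antisymm (h k) zero_le
    exact hgne.ne' (le_antisymm ((measure_mono hcover).trans h0.le) zero_le)
  obtain ⟨k, hSk⟩ := hex
  set a : ℝ := ((k:ℝ) + 1)⁻¹ with hadef
  have ha : 0 < a := by positivity
  have hSfin : volume (S k) ≠ ⊤ :=
    ((measure_mono Set.inter_subset_left).trans_lt
      (isCompact_closedBall (0:E2) k).measure_lt_top).ne
  -- Egorov
  have hεpos : 0 < (volume (S k)).toReal / 2 := by
    have := ENNReal.toReal_pos hSk.ne' hSfin; linarith
  obtain ⟨t, htsub, htmeas, htle, hunif⟩ :=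
    MeasureTheory.tendstoUniformlyOn_of_ae_tendsto hu'm hgm (hSmeas k) hSfin
      (htend.mono fun x hx _ => hx) hεpos
  set T : Set E2 := S k \ t with hTdef
  have hTmeas : MeasurableSet T := (hSmeas k).diff htmeas
  have httop : volume t ≠ ⊤ := (lt_of_le_of_lt htle ENNReal.ofReal_lt_top).ne
  have htlt : volume t < volume (S k) := by
    refine lt_of_le_of_lt htle ?_
    conv_rhs => rw [← ENNReal.ofReal_toReal hSfin]
    rw [ENNReal.ofReal_lt_ofReal_iff (ENNReal.toReal_pos hSk.ne' hSfin)]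
    linarith [ENNReal.toReal_pos hSk.ne' hSfin]
  have hμT : 0 < volume T := by
    rw [hTdef, measure_diff htsub htmeas.nullMeasurableSet httop]
    exact tsub_pos_of_lt htlt
  have hTfin : volume T ≠ ⊤ :=
    ((measure_mono Set.diff_subset).trans_lt hSfin.lt_top).ne
  -- uniform closeness for large n
  obtain ⟨N, hN⟩ := eventually_atTop.1
    ((Metric.tendstoUniformlyOn_iff.1 hunif) (a / 2) (by positivity))
  set m : ℝ := (a / 2) ^ 2 with hmdef
  set K : ℝ := ((k:ℝ) + 1 + a / 2) ^ 2 with hKdef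
  have hm : 0 < m := by positivity
  have hbound : ∀ n, N ≤ n → ∀ x ∈ T, m ≤ (u' n x) ^ 2 ∧ (u' n x) ^ 2 ≤ K := by
    intro n hn x hx
    have hd := hN n hn x hx
    rw [Real.dist_eq] at hd
    have h1 : a ≤ |g x| := hx.1.2.1
    have h2 : |g x| ≤ (k:ℝ) + 1 := hx.1.2.2
    have h3 : |g x| - |u' n x| ≤ |g x - u' n x| := abs_sub_abs_le_abs_sub _ _
    have h4 : |u' n x| - |g x| ≤ |u' n x - g x| := abs_sub_abs_le_abs_sub _ _
    have h5 : |u' n x - g x| = |g x - u' n x| := abs_sub_comm _ _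
    constructor
    · have hle : a / 2 ≤ |u' n x| := by linarith
      calc m = (a / 2) ^ 2 := rfl
        _ ≤ |u' n x| ^ 2 := pow_le_pow_left₀ (by positivity) hle 2
        _ = (u' n x) ^ 2 := sq_abs _
    · have hle : |u' n x| ≤ (k:ℝ) + 1 + a / 2 := by linarith
      calc (u' n x) ^ 2 = |u' n x| ^ 2 := (sq_abs _).symm
        _ ≤ K := pow_le_pow_left₀ (abs_nonneg _) hle 2
  -- abbreviations
  have hvmeas : ∀ n, AEMeasurable (v n) (volume : Measure E2) := fun n => (hv n).1.aemeasurable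
  have hvsq : ∀ n, AEMeasurable (fun y : E2 => (v n y) ^ 2) (volume : Measure E2) :=
    fun n => (hvmeas n).pow_const 2
  set V : ℕ → ENNReal := fun n => ∫⁻ x : E2, ENNReal.ofReal ((v n x) ^ 2) with hVdef
  set c₁ : ENNReal := ENNReal.ofReal (Real.log (1 + (k:ℝ))) with hc₁def
  have hlogk : (0:ℝ) ≤ Real.log (1 + (k:ℝ)) := Real.log_nonneg (by
    have : (0:ℝ) ≤ (k:ℝ) := Nat.cast_nonneg k
    linarith)
  set W : ℕ → ENNReal :=
    fun n => ∫⁻ x : E2, ENNReal.ofReal (Real.log (1 + ‖x‖) * (v n x) ^ 2) with hWdef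
  set Bq : ℕ → ENNReal := fun n => ∫⁻ z : E2 × E2,
    ENNReal.ofReal (Real.log (1 + ‖z.1 - z.2‖) * (u n z.1) ^ 2 * (v n z.2) ^ 2) with hBqdef
  set I : ℕ → E2 → ENNReal :=
    fun n x => ∫⁻ y : E2, ENNReal.ofReal (Real.log (1 + ‖x - y‖) * (v n y) ^ 2) with hIdef
  have hImeas : ∀ n x, AEMeasurable
      (fun y : E2 => ENNReal.ofReal (Real.log (1 + ‖x - y‖) * (v n y) ^ 2))
      (volume : Measure E2) := by
    intro n x
    refine ENNReal.measurable_ofReal.comp_aemeasurable (AEMeasurable.mul ?_ (hvsq n))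
    exact (Real.measurable_log.comp
      ((measurable_const.add (measurable_const.sub measurable_id).norm))).aemeasurable
  -- the inner splitting estimate
  have hlogy : ∀ n, ∀ x ∈ T, W n ≤ c₁ * V n + I n x := by
    intro n x hx
    have hxnorm : ‖x‖ ≤ (k:ℝ) := mem_closedBall_zero_iff.1 hx.1.1
    have step1 : W n ≤ ∫⁻ y : E2,
        (ENNReal.ofReal (Real.log (1 + (k:ℝ)) * (v n y) ^ 2)
          + ENNReal.ofReal (Real.log (1 + ‖x - y‖) * (v n y) ^ 2)) := by
      refine lintegral_mono fun y => ?_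
      have hlog := log_split x y (k:ℝ) hxnorm
      have h02 : 0 ≤ Real.log (1 + ‖x - y‖) := Real.log_nonneg (by linarith [norm_nonneg (x - y)])
      calc ENNReal.ofReal (Real.log (1 + ‖y‖) * (v n y) ^ 2)
          ≤ ENNReal.ofReal ((Real.log (1 + (k:ℝ)) + Real.log (1 + ‖x - y‖)) * (v n y) ^ 2) :=
            ENNReal.ofReal_le_ofReal (mul_le_mul_of_nonneg_right hlog (sq_nonneg _))
        _ = _ := by
            rw [add_mul, ENNReal.ofReal_add (by positivity) (by positivity)]
    have hm1 : AEMeasurable (fun y : E2 => ENNReal.ofReal (Real.log (1 + (k:ℝ)) * (v n y) ^ 2))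
        (volume : Measure E2) :=
      ENNReal.measurable_ofReal.comp_aemeasurable (aemeasurable_const.mul (hvsq n))
    rw [lintegral_add_left' hm1] at step1
    refine le_trans step1 (le_of_eq ?_)
    congr 1
    simp_rw [ENNReal.ofReal_mul hlogk]
    exact lintegral_const_mul'' _ (ENNReal.measurable_ofReal.comp_aemeasurable (hvsq n))
  -- the key estimate
  have key : ∀ n, N ≤ n →
      ENNReal.ofReal m * volume T * W n
        ≤ ENNReal.ofReal K * volume T * (c₁ * V n) + Bq n := by
    intro n hn
    have hprodmeas : AEMeasurable (fun z : E2 × E2 =>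
        ENNReal.ofReal (Real.log (1 + ‖z.1 - z.2‖) * (u n z.1) ^ 2 * (v n z.2) ^ 2))
        ((volume : Measure E2).prod (volume : Measure E2)) := by
      refine ENNReal.measurable_ofReal.comp_aemeasurable (AEMeasurable.mul (AEMeasurable.mul ?_ ?_) ?_)
      · exact (Real.measurable_log.comp
          (measurable_const.add (measurable_fst.sub measurable_snd).norm)).aemeasurable
      · exact ((hu n).1.aemeasurable.comp_quasiMeasurePreserving
          Measure.quasiMeasurePreserving_fst).pow_const 2
      · exact ((hv n).1.aemeasurable.comp_quasiMeasurePreserving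
          Measure.quasiMeasurePreserving_snd).pow_const 2
    calc ENNReal.ofReal m * volume T * W n
        = ∫⁻ _x in T, ENNReal.ofReal m * W n ∂(volume : Measure E2) := by
          rw [setLIntegral_const]; ring
      _ ≤ ∫⁻ x in T, ENNReal.ofReal ((u' n x) ^ 2) * (c₁ * V n + I n x) ∂(volume : Measure E2) := by
          refine lintegral_mono_ae ((ae_restrict_iff' hTmeas).2 (ae_of_all _ fun x hx => ?_))
          exact mul_le_mul' (ENNReal.ofReal_le_ofReal (hbound n hn x hx).1) (hlogy n x hx)
      _ = (∫⁻ x in T, ENNReal.ofReal ((u' n x) ^ 2) * (c₁ * V n) ∂(volume : Measure E2))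
          + ∫⁻ x in T, ENNReal.ofReal ((u' n x) ^ 2) * I n x ∂(volume : Measure E2) := by
          simp_rw [mul_add]
          exact lintegral_add_left
            ((ENNReal.measurable_ofReal.comp ((hu'm n).measurable.pow_const 2)).mul_const _) _
      _ ≤ ENNReal.ofReal K * volume T * (c₁ * V n) + Bq n := by
          refine add_le_add ?_ ?_
          · calc (∫⁻ x in T, ENNReal.ofReal ((u' n x) ^ 2) * (c₁ * V n) ∂(volume : Measure E2))
                ≤ ∫⁻ _x in T, ENNReal.ofReal K * (c₁ * V n) ∂(volume : Measure E2) := by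
                  refine lintegral_mono_ae ((ae_restrict_iff' hTmeas).2 (ae_of_all _ fun x hx => ?_))
                  exact mul_le_mul_left (ENNReal.ofReal_le_ofReal (hbound n hn x hx).2) _
              _ = ENNReal.ofReal K * volume T * (c₁ * V n) := by
                  rw [setLIntegral_const]; ring
          · have heq : (fun x => ENNReal.ofReal ((u' n x) ^ 2) * I n x)
                =ᵐ[(volume : Measure E2).restrict T]
                (fun x => ENNReal.ofReal ((u n x) ^ 2) * I n x) := by
              filter_upwards [ae_restrict_of_ae (hu'_eq n)] with x hx
              rw [hx]
            calc (∫⁻ x in T, ENNReal.ofReal ((u' n x) ^ 2) * I n x ∂(volume : Measure E2))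
                = ∫⁻ x in T, ENNReal.ofReal ((u n x) ^ 2) * I n x ∂(volume : Measure E2) :=
                  lintegral_congr_ae heq
              _ ≤ ∫⁻ x : E2, ENNReal.ofReal ((u n x) ^ 2) * I n x :=
                  setLIntegral_le_lintegral _ _
              _ = ∫⁻ x : E2, ∫⁻ y : E2,
                    ENNReal.ofReal (Real.log (1 + ‖x - y‖) * (u n x) ^ 2 * (v n y) ^ 2) := by
                  refine lintegral_congr fun x => ?_
                  rw [hIdef]
                  rw [← lintegral_const_mul'' _ (hImeas n x)]
                  refine lintegral_congr fun y => ?_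
                  rw [← ENNReal.ofReal_mul (sq_nonneg _)]
                  congr 1
                  ring
              _ = Bq n := (lintegral_prod _ hprodmeas).symm
  -- convergence of V
  have hVeq : ∀ n, V n = ENNReal.ofReal (∫ x : E2, (v n x) ^ 2) := fun n =>
    (ofReal_integral_eq_lintegral_ofReal (hv n).integrable_sq
      (ae_of_all _ fun x => sq_nonneg _)).symm
  have hV0 : Tendsto V atTop (nhds 0) := by
    have h1 := ENNReal.tendsto_ofReal hv0
    simp only [ENNReal.ofReal_zero] at h1
    exact h1.congr fun n => (hVeq n).symm
  -- final squeeze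
  set b : ENNReal := ENNReal.ofReal m * volume T with hbdef
  have hb0 : b ≠ 0 := (ENNReal.mul_pos (ENNReal.ofReal_pos.2 hm).ne' hμT.ne').ne'
  have hbtop : b ≠ ⊤ := ENNReal.mul_ne_top ENNReal.ofReal_ne_top hTfin
  have hC : ENNReal.ofReal K * volume T * c₁ ≠ ⊤ :=
    ENNReal.mul_ne_top (ENNReal.mul_ne_top ENNReal.ofReal_ne_top hTfin) ENNReal.ofReal_ne_top
  have h1 : Tendsto (fun n => ENNReal.ofReal K * volume T * (c₁ * V n)) atTop (nhds 0) := by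
    have h2 := ENNReal.Tendsto.const_mul (a := ENNReal.ofReal K * volume T * c₁) hV0 (Or.inr hC)
    simp only [mul_zero] at h2
    exact h2.congr fun n => by ring
  have h2 : Tendsto (fun n => (ENNReal.ofReal K * volume T * (c₁ * V n) + Bq n) / b)
      atTop (nhds 0) := by
    have h3 := (h1.add hB0)
    simp only [add_zero] at h3
    have h4 := ENNReal.Tendsto.mul_const (b := b⁻¹) h3 (Or.inr (ENNReal.inv_ne_top.2 hb0))
    simp only [zero_mul] at h4
    exact h4.congr fun n => by rw [div_eq_mul_inv]
  refine tendsto_of_tendsto_of_tendsto_of_le_of_le' tendsto_const_nhds h2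
    (Eventually.of_forall fun n => zero_le) ?_
  refine eventually_atTop.2 ⟨N, fun n hn => ?_⟩
  rw [ENNReal.le_div_iff_mul_le (Or.inl hb0) (Or.inl hbtop), mul_comm]
  exact key n hn
end

section
/- Let V : ℝ² → ℝ be continuously differentiable with inf_{x∈ℝ²} V(x) > 0, and suppose that for every x ∈ ℝ² the function t ↦ V(tx) − ½⟨∇V(tx), tx⟩ is nondecreasing on (0, ∞). Then ⟨∇V(x), x⟩ ≥ 0 for all x ∈ ℝ². -/
open scoped InnerProductSpace

/-- Lemma 5.1: under (V₀) and (V₂), `⟨∇V(x), x⟩ ≥ 0` for all `x ∈ ℝ²`. -/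
theorem stmt4 (V : E2 → ℝ) (hV : ContDiff ℝ 1 V)
    (hinf : 0 < ⨅ x : E2, V x)
    (hmono : ∀ x : E2, MonotoneOn
      (fun t : ℝ => V (t • x) - (1 / 2) * ⟪gradient V (t • x), t • x⟫_ℝ)
      (Set.Ioi 0)) :
    ∀ x : E2, 0 ≤ ⟪gradient V x, x⟫_ℝ := by
  intro x
  set m := ⨅ y : E2, V y with hm
  have hbdd : BddBelow (Set.range V) := by
    by_contra h
    rw [hm, iInf, Real.sInf_of_not_bddBelow h] at hinf
    exact lt_irrefl 0 hinf
  have hmle : ∀ y : E2, m ≤ V y := fun y => ciInf_le hbdd y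
  have hip : ∀ y z : E2, ⟪gradient V y, z⟫_ℝ = fderiv ℝ V y z := fun y z => by
    rw [gradient, InnerProductSpace.toDual_symm_apply]
  have hd : ∀ t : ℝ, HasDerivAt (fun s : ℝ => V (s • x)) (⟪gradient V (t • x), x⟫_ℝ) t := by
    intro t
    have h1 : HasDerivAt (fun s : ℝ => s • x) x t := by
      simpa using (hasDerivAt_id t).smul_const x
    have := (hV.differentiable one_ne_zero (t • x)).hasFDerivAt.comp_hasDerivAt t h1
    rw [hip]; exact this
  set h₁ : ℝ := V x - (1 / 2) * ⟪gradient V x, x⟫_ℝ with hh₁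
  have hkey : ∀ t : ℝ, 1 ≤ t →
      h₁ ≤ V (t • x) - (1 / 2) * ⟪gradient V (t • x), t • x⟫_ℝ := by
    intro t ht
    have := hmono x (Set.mem_Ioi.2 one_pos) (Set.mem_Ioi.2 (lt_of_lt_of_le one_pos ht)) ht
    simpa only [one_smul] using this
  set φ : ℝ → ℝ := fun t => (V (t • x) - h₁) / t ^ 2 with hφ
  have hder : ∀ t : ℝ, 0 < t → HasDerivAt φ
      ((⟪gradient V (t • x), x⟫_ℝ * t ^ 2 - (V (t • x) - h₁) * (2 * t ^ 1)) / (t ^ 2) ^ 2) t := by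
    intro t ht
    exact ((hd t).sub_const h₁).div (hasDerivAt_pow 2 t) (by positivity)
  have hanti : AntitoneOn φ (Set.Ici 1) := by
    apply antitoneOn_of_deriv_nonpos (convex_Ici 1)
    · intro t ht
      exact (hder t (lt_of_lt_of_le one_pos ht)).continuousAt.continuousWithinAt
    · intro t ht
      rw [interior_Ici] at ht
      exact (hder t (lt_trans one_pos ht)).differentiableAt.differentiableWithinAt
    · intro t ht
      rw [interior_Ici] at ht
      have ht1 : (1:ℝ) < t := ht
      have ht0 : (0:ℝ) < t := lt_trans one_pos ht1
      rw [(hder t ht0).deriv]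
      apply div_nonpos_of_nonpos_of_nonneg _ (by positivity)
      have hk := hkey t ht1.le
      have hsr : ⟪gradient V (t • x), t • x⟫_ℝ = t * ⟪gradient V (t • x), x⟫_ℝ :=
        real_inner_smul_right _ _ _
      rw [hsr] at hk
      simp only [pow_one]
      set A := V (t • x) with hA
      set B := ⟪gradient V (t • x), x⟫_ℝ with hB
      have h4 : t * B ≤ 2 * (A - h₁) := by clear_value A B h₁ φ m; linarith
      have h5 := mul_le_mul_of_nonneg_left h4 ht0.le
      nlinarith [h5]
  have hφ1 : φ 1 = (1 / 2) * ⟪gradient V x, x⟫_ℝ := by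
    simp [hφ, hh₁, one_smul]
  have hbound : ∀ T : ℝ, 1 ≤ T → (m - h₁) / T ^ 2 ≤ (1 / 2) * ⟪gradient V x, x⟫_ℝ := by
    intro T hT
    have h2 : φ T ≤ φ 1 := hanti (Set.mem_Ici.2 le_rfl) (Set.mem_Ici.2 hT) hT
    have h3 : (m - h₁) / T ^ 2 ≤ φ T := by
      apply div_le_div_of_nonneg_right _ (by positivity)
      · linarith [hmle (T • x)]
    rw [hφ1] at h2
    linarith
  have hlim : Filter.Tendsto (fun T : ℝ => (m - h₁) / T ^ 2) Filter.atTop (nhds 0) :=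
    Filter.Tendsto.div_atTop tendsto_const_nhds (Filter.tendsto_pow_atTop two_ne_zero)
  have h0 : (0:ℝ) ≤ (1 / 2) * ⟪gradient V x, x⟫_ℝ := by
    apply le_of_tendsto hlim
    filter_upwards [Filter.eventually_ge_atTop 1] with T hT using hbound T hT
  linarith
end

section
/- Let V : ℝ² → ℝ be continuously differentiable and suppose that for every x ∈ ℝ² the function t ↦ V(tx) − ½⟨∇V(tx), tx⟩ is nondecreasing on (0, ∞). Then for every x ∈ ℝ² and every t > 0 one has t²·V(x) + ((1−t²)/2)·⟨∇V(x), x⟩ ≥ t²·V(t⁻¹x). -/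
open scoped InnerProductSpace

lemma aux_deriv (V : E2 → ℝ) (hV : ContDiff ℝ 1 V) (x : E2) {t : ℝ} (ht : t ≠ 0) :
    HasDerivAt (fun u : ℝ => u ^ 2 * V (u⁻¹ • x))
      (2 * t * V (t⁻¹ • x) - ⟪gradient V (t⁻¹ • x), x⟫_ℝ) t := by
  have hd : DifferentiableAt ℝ V (t⁻¹ • x) := hV.differentiable one_ne_zero _
  have h1 : HasDerivAt (fun u : ℝ => u⁻¹ • x) ((-(t ^ 2)⁻¹) • x) t :=
    (hasDerivAt_inv ht).smul_const x
  have h2 : HasDerivAt (fun u : ℝ => V (u⁻¹ • x))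
      ((InnerProductSpace.toDual ℝ E2 (gradient V (t⁻¹ • x))) ((-(t ^ 2)⁻¹) • x)) t :=
    hd.hasGradientAt.hasFDerivAt.comp_hasDerivAt t h1
  have h3 : HasDerivAt (fun u : ℝ => u ^ 2) (2 * t) t := by
    simpa using (hasDerivAt_pow 2 t)
  have h4 := h3.mul h2
  refine h4.congr_deriv ?_
  rw [InnerProductSpace.toDual_apply_apply, real_inner_smul_right]
  field_simp
  ring

/-- The key inequality (5.2) in the proof of Lemma 5.1. -/
theorem stmt5 (V : E2 → ℝ) (hV : ContDiff ℝ 1 V)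
    (hmono : ∀ x : E2, MonotoneOn
      (fun t : ℝ => V (t • x) - (1 / 2) * ⟪gradient V (t • x), t • x⟫_ℝ)
      (Set.Ioi 0)) :
    ∀ x : E2, ∀ t : ℝ, 0 < t →
      t ^ 2 * V (t⁻¹ • x) ≤ t ^ 2 * V x + ((1 - t ^ 2) / 2) * ⟪gradient V x, x⟫_ℝ := by
  intro x t ht
  set g1 : ℝ := V x - (1 / 2) * ⟪gradient V x, x⟫_ℝ with hg1
  set F : ℝ → ℝ := fun u => u ^ 2 * V (u⁻¹ • x) - u ^ 2 * g1 with hF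
  -- derivative of F at u ≠ 0
  have hFd : ∀ u : ℝ, u ≠ 0 → HasDerivAt F
      (2 * u * V (u⁻¹ • x) - ⟪gradient V (u⁻¹ • x), x⟫_ℝ - 2 * u * g1) u := by
    intro u hu
    have h1 := aux_deriv V hV x hu
    have h2 : HasDerivAt (fun u : ℝ => u ^ 2 * g1) (2 * u * g1) u := by
      simpa [mul_comm] using (hasDerivAt_pow 2 u).mul_const g1
    exact h1.sub h2
  -- monotonicity comparison with point 1
  have hmx := hmono x
  have hcomp : ∀ s : ℝ, 0 < s → (s ≤ 1 →
      V (s • x) - (1 / 2) * ⟪gradient V (s • x), s • x⟫_ℝ ≤ g1) ∧ (1 ≤ s →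
      g1 ≤ V (s • x) - (1 / 2) * ⟪gradient V (s • x), s • x⟫_ℝ) := by
    intro s hs
    have h1 : (1 : ℝ) ∈ Set.Ioi (0 : ℝ) := by norm_num
    have hs' : s ∈ Set.Ioi (0 : ℝ) := hs
    constructor
    · intro hle
      have := hmx hs' h1 hle
      simpa [one_smul, hg1] using this
    · intro hle
      have := hmx h1 hs' hle
      simpa [one_smul, hg1] using this
  -- sign of derivative: D u = 2u * (g(1/u) - g1)
  have hsign : ∀ u : ℝ, 0 < u →
      2 * u * V (u⁻¹ • x) - ⟪gradient V (u⁻¹ • x), x⟫_ℝ - 2 * u * g1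
        = 2 * u * ((V (u⁻¹ • x) - (1 / 2) * ⟪gradient V (u⁻¹ • x), u⁻¹ • x⟫_ℝ) - g1) := by
    intro u hu
    rw [real_inner_smul_right]
    field_simp
  have key : F t ≤ F 1 := by
    rcases le_or_gt 1 t with h1t | h1t
    · -- F antitone on [1, t]
      have hanti : AntitoneOn F (Set.Icc 1 t) := by
        apply antitoneOn_of_deriv_nonpos (convex_Icc 1 t)
        · intro u hu
          have hu0 : u ≠ 0 := by have := hu.1; positivity
          exact (hFd u hu0).differentiableAt.continuousAt.continuousWithinAt
        · intro u hu
          rw [interior_Icc] at hu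
          have hu0 : (0 : ℝ) < u := lt_trans one_pos hu.1
          exact ((hFd u hu0.ne').differentiableAt).differentiableWithinAt
        · intro u hu
          rw [interior_Icc] at hu
          have hu0 : (0 : ℝ) < u := lt_trans one_pos hu.1
          rw [(hFd u hu0.ne').deriv, hsign u hu0]
          have hinv : (0 : ℝ) < u⁻¹ := by positivity
          have hle : u⁻¹ ≤ 1 := by
            rw [inv_le_one_iff₀]; right; exact le_of_lt hu.1
          have := (hcomp u⁻¹ hinv).1 hle
          nlinarith
      exact hanti (Set.left_mem_Icc.mpr h1t) (Set.right_mem_Icc.mpr h1t) h1t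
    · -- F monotone on [t, 1]
      have hmonF : MonotoneOn F (Set.Icc t 1) := by
        apply monotoneOn_of_deriv_nonneg (convex_Icc t 1)
        · intro u hu
          have hu0 : u ≠ 0 := by have := hu.1; nlinarith
          exact (hFd u hu0).differentiableAt.continuousAt.continuousWithinAt
        · intro u hu
          rw [interior_Icc] at hu
          have hu0 : (0 : ℝ) < u := lt_trans ht hu.1
          exact ((hFd u hu0.ne').differentiableAt).differentiableWithinAt
        · intro u hu
          rw [interior_Icc] at hu
          have hu0 : (0 : ℝ) < u := lt_trans ht hu.1
          rw [(hFd u hu0.ne').deriv, hsign u hu0]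
          have hinv : (0 : ℝ) < u⁻¹ := by positivity
          have hle : (1 : ℝ) ≤ u⁻¹ := (one_le_inv₀ hu0).mpr (le_of_lt hu.2)
          have := (hcomp u⁻¹ hinv).2 hle
          nlinarith
      exact hmonF (Set.left_mem_Icc.mpr h1t.le) (Set.right_mem_Icc.mpr h1t.le) h1t.le
  have hF1 : F 1 = V x - g1 := by simp [hF]
  have hFt : F t = t ^ 2 * V (t⁻¹ • x) - t ^ 2 * g1 := rfl
  rw [hFt, hF1, hg1] at key
  nlinarith [key]
end

section
/- Let β : (0,∞) → ℝ be continuously differentiable such that the function t ↦ β'(t)/t is nonincreasing on (0,∞) and there exist constants 0 < m ≤ M with m ≤ β'(t)/t ≤ M for all t > 0. Let C₁ > 0, C₂ ∈ ℝ, C₃ > 0, C₄ ≥ 0 and let p ≥ 3 be a real number. Define g : (0,∞) → ℝ by g(t) = C₁β(t) + C₂t⁴ − C₃t⁴·log t − C₄t^{2p−2}. Then g has a unique positive critical point t₀, i.e. there is exactly one t₀ > 0 with g'(t₀) = 0; moreover g'(t) > 0 for 0 < t < t₀ and g'(t) < 0 for t > t₀. -/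
open Set

/-- The auxiliary function `g` of Lemma 5.2. -/
noncomputable def gfun (C₁ C₂ C₃ C₄ p : ℝ) (β : ℝ → ℝ) (t : ℝ) : ℝ :=
  C₁ * β t + C₂ * t ^ 4 - C₃ * t ^ 4 * Real.log t - C₄ * t ^ (2 * p - 2)

/-- Lemma 5.2: `g` has a unique positive critical point `t₀`, with `g' > 0` before it
and `g' < 0` after it. -/
theorem stmt6 (β : ℝ → ℝ) (hβ : ContDiffOn ℝ 1 β (Set.Ioi 0))
    (hmono : AntitoneOn (fun t => deriv β t / t) (Set.Ioi 0))
    (m M : ℝ) (hm : 0 < m) (hmM : m ≤ M)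
    (hbd : ∀ t > (0 : ℝ), m ≤ deriv β t / t ∧ deriv β t / t ≤ M)
    (C₁ C₂ C₃ C₄ p : ℝ) (hC₁ : 0 < C₁) (hC₃ : 0 < C₃) (hC₄ : 0 ≤ C₄) (hp : 3 ≤ p) :
    ∃ t₀ > (0 : ℝ), deriv (gfun C₁ C₂ C₃ C₄ p β) t₀ = 0 ∧
      (∀ t > (0 : ℝ), deriv (gfun C₁ C₂ C₃ C₄ p β) t = 0 → t = t₀) ∧
      (∀ t : ℝ, 0 < t → t < t₀ → 0 < deriv (gfun C₁ C₂ C₃ C₄ p β) t) ∧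
      (∀ t : ℝ, t₀ < t → deriv (gfun C₁ C₂ C₃ C₄ p β) t < 0) := by
  have hexp : (0:ℝ) ≤ 2 * p - 6 := by linarith
  have hexp2 : (0:ℝ) ≤ 2 * p - 2 := by linarith
  set h : ℝ → ℝ := fun t => C₁ * (deriv β t / t) / t ^ 2 + 4 * C₂
      - C₃ * (4 * Real.log t + 1) - C₄ * (2 * p - 2) * t ^ (2 * p - 6) with hhdef
  -- the key derivative computation
  have key : ∀ t : ℝ, 0 < t → deriv (gfun C₁ C₂ C₃ C₄ p β) t = t ^ 3 * h t := by
    intro t ht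
    have hβd : HasDerivAt β (deriv β t) t :=
      ((hβ.differentiableOn one_ne_zero).differentiableAt (isOpen_Ioi.mem_nhds ht)).hasDerivAt
    have h4 : HasDerivAt (fun s : ℝ => s ^ 4) (4 * t ^ 3) t := by
      simpa using hasDerivAt_pow 4 t
    have hlog : HasDerivAt Real.log t⁻¹ t := Real.hasDerivAt_log ht.ne'
    have hrp : HasDerivAt (fun s : ℝ => s ^ (2 * p - 2)) ((2 * p - 2) * t ^ (2 * p - 2 - 1)) t :=
      Real.hasDerivAt_rpow_const (Or.inl ht.ne')
    have hg : HasDerivAt (gfun C₁ C₂ C₃ C₄ p β)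
        (C₁ * deriv β t + C₂ * (4 * t ^ 3)
          - (C₃ * (4 * t ^ 3) * Real.log t + C₃ * t ^ 4 * t⁻¹)
          - C₄ * ((2 * p - 2) * t ^ (2 * p - 2 - 1))) t := by
      have : gfun C₁ C₂ C₃ C₄ p β = fun s : ℝ =>
          C₁ * β s + C₂ * s ^ 4 - C₃ * s ^ 4 * Real.log s - C₄ * s ^ (2 * p - 2) := rfl
      rw [this]
      exact (((hβd.const_mul C₁).add (h4.const_mul C₂)).sub
        ((h4.const_mul C₃).mul hlog)).sub (hrp.const_mul C₄)
    have hsplit : t ^ (2 * p - 2 - 1) = t ^ (2 * p - 6) * t ^ (3:ℕ) := by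
      rw [← Real.rpow_natCast t 3, ← Real.rpow_add ht]
      norm_num
      congr 1
      ring
    rw [hg.deriv, hhdef, hsplit]
    field_simp
  -- strict antitonicity of h
  have hanti : StrictAntiOn h (Ioi 0) := by
    intro a ha b hb hab
    simp only [hhdef]
    have ha' : (0:ℝ) < a := ha
    have hb' : (0:ℝ) < b := hb
    have hqa := (hbd a ha').1
    have hqb := (hbd b hb').1
    have hq : deriv β b / b ≤ deriv β a / a := hmono ha hb hab.le
    have h1 : C₁ * (deriv β b / b) / b ^ 2 ≤ C₁ * (deriv β a / a) / a ^ 2 := by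
      have hdiv : deriv β b / b / b ^ 2 ≤ deriv β a / a / a ^ 2 :=
        div_le_div₀ (le_trans hm.le hqa) hq (pow_pos ha' 2)
          (pow_le_pow_left₀ ha'.le hab.le 2)
      calc C₁ * (deriv β b / b) / b ^ 2 = C₁ * (deriv β b / b / b ^ 2) := by ring
        _ ≤ C₁ * (deriv β a / a / a ^ 2) := by
              exact mul_le_mul_of_nonneg_left hdiv hC₁.le
        _ = C₁ * (deriv β a / a) / a ^ 2 := by ring
    have h3 : C₃ * (4 * Real.log a + 1) < C₃ * (4 * Real.log b + 1) := by
      have := Real.log_lt_log ha' hab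
      nlinarith
    have h4 : C₄ * (2 * p - 2) * a ^ (2 * p - 6) ≤ C₄ * (2 * p - 2) * b ^ (2 * p - 6) := by
      have hr := Real.rpow_le_rpow ha'.le hab.le hexp
      exact mul_le_mul_of_nonneg_left hr (mul_nonneg hC₄ hexp2)
    linarith
  -- continuity of h on (0, ∞)
  have hderiv_cont : ContinuousOn (deriv β) (Ioi 0) :=
    hβ.continuousOn_deriv_of_isOpen isOpen_Ioi le_rfl
  have hcont : ContinuousOn h (Ioi 0) := by
    rw [hhdef]
    apply ContinuousOn.sub
    apply ContinuousOn.sub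
    apply ContinuousOn.add
    · exact (continuousOn_const.mul
        (hderiv_cont.div continuousOn_id fun x hx => ne_of_gt hx)).div
        (continuousOn_id.pow 2) (fun x hx => pow_ne_zero 2 (ne_of_gt hx))
    · exact continuousOn_const
    · exact continuousOn_const.mul ((continuousOn_const.mul
        (Real.continuousOn_log.mono fun x hx => Set.mem_compl_singleton_iff.2 (ne_of_gt hx))).add
        continuousOn_const)
    · exact continuousOn_const.mul
        (continuousOn_id.rpow_const fun x hx => Or.inl (ne_of_gt hx))
  -- a point where h is positive
  set K : ℝ := |4 * C₂ - C₃ - C₄ * (2 * p - 2)| + 1 with hKdef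
  have hKpos : 0 < K := by positivity
  have hCmK : 0 < C₁ * m / K := by positivity
  set s : ℝ := Real.sqrt (C₁ * m / K) with hsdef
  have hspos : 0 < s := Real.sqrt_pos.2 hCmK
  set a : ℝ := min 1 (s / 2) with hadef
  have ha1 : 0 < a := lt_min one_pos (by linarith)
  have ha_le1 : a ≤ 1 := min_le_left _ _
  have ha_lt_s : a < s := lt_of_le_of_lt (min_le_right _ _) (by linarith)
  have ha2 : a ^ 2 < C₁ * m / K := by
    have := pow_lt_pow_left₀ ha_lt_s ha1.le (n := 2) (by norm_num)
    rwa [hsdef, Real.sq_sqrt hCmK.le] at this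
  have hK_lt : K < C₁ * m / a ^ 2 := by
    rw [lt_div_iff₀ (pow_pos ha1 2)]
    rw [lt_div_iff₀ hKpos] at ha2
    nlinarith
  have ha_pos : 0 < h a := by
    simp only [hhdef]
    have hqa := (hbd a ha1).1
    have hterm1 : C₁ * m / a ^ 2 ≤ C₁ * (deriv β a / a) / a ^ 2 := by
      gcongr
    have hterm3 : C₃ * (4 * Real.log a + 1) ≤ C₃ := by
      have := Real.log_nonpos ha1.le ha_le1
      nlinarith
    have hterm4 : C₄ * (2 * p - 2) * a ^ (2 * p - 6) ≤ C₄ * (2 * p - 2) := by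
      have h1 := Real.rpow_le_one ha1.le ha_le1 hexp
      have h2 : 0 ≤ C₄ * (2 * p - 2) := mul_nonneg hC₄ hexp2
      nlinarith [Real.rpow_nonneg ha1.le (2 * p - 6)]
    have habs : -(|4 * C₂ - C₃ - C₄ * (2 * p - 2)|) ≤ 4 * C₂ - C₃ - C₄ * (2 * p - 2) :=
      neg_abs_le _
    have hKeq : K = |4 * C₂ - C₃ - C₄ * (2 * p - 2)| + 1 := hKdef
    linarith
  -- a point where h is negative
  set L : ℝ := max 1 ((C₁ * M + 4 * C₂ + 1) / (4 * C₃)) with hLdef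
  set b : ℝ := Real.exp L with hbdef
  have hL1 : 1 ≤ L := le_max_left _ _
  have hb_ge1 : 1 ≤ b := by
    rw [hbdef]
    calc (1:ℝ) ≤ Real.exp 1 := by linarith [Real.add_one_le_exp (1:ℝ)]
      _ ≤ Real.exp L := Real.exp_le_exp.2 hL1
  have hb_pos : 0 < b := lt_of_lt_of_le one_pos hb_ge1
  have hlogb : Real.log b = L := Real.log_exp L
  have hL_big : C₁ * M + 4 * C₂ + 1 ≤ 4 * C₃ * L := by
    have := le_max_right 1 ((C₁ * M + 4 * C₂ + 1) / (4 * C₃))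
    rw [div_le_iff₀ (by linarith : (0:ℝ) < 4 * C₃)] at this
    linarith [this]
  have hb_neg : h b < 0 := by
    simp only [hhdef]
    have hqb := (hbd b hb_pos).2
    have hterm1 : C₁ * (deriv β b / b) / b ^ 2 ≤ C₁ * M := by
      have hb2 : (1:ℝ) ≤ b ^ 2 := by nlinarith
      have h1 : C₁ * (deriv β b / b) ≤ C₁ * M := mul_le_mul_of_nonneg_left hqb hC₁.le
      have hnum : 0 ≤ C₁ * (deriv β b / b) :=
        mul_nonneg hC₁.le (hm.le.trans (hbd b hb_pos).1)
      exact (div_le_self hnum hb2).trans h1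
    have hterm4 : 0 ≤ C₄ * (2 * p - 2) * b ^ (2 * p - 6) :=
      mul_nonneg (mul_nonneg hC₄ hexp2) (Real.rpow_nonneg hb_pos.le _)
    rw [hlogb]
    have hx : C₃ * (4 * L + 1) = 4 * C₃ * L + C₃ := by ring
    linarith
  -- intermediate value theorem
  have hab : a ≤ b := ha_le1.trans hb_ge1
  have hsub : Icc a b ⊆ Ioi 0 := fun x hx => lt_of_lt_of_le ha1 hx.1
  obtain ⟨t₀, ht₀mem, ht₀⟩ := intermediate_value_Icc' hab (hcont.mono hsub)
    (⟨hb_neg.le, ha_pos.le⟩ : (0:ℝ) ∈ Icc (h b) (h a))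
  have ht₀pos : 0 < t₀ := hsub ht₀mem
  refine ⟨t₀, ht₀pos, ?_, ?_, ?_, ?_⟩
  · rw [key t₀ ht₀pos, ht₀, mul_zero]
  · intro t ht hder
    rw [key t ht] at hder
    have hht : h t = 0 := by
      rcases mul_eq_zero.1 hder with h' | h'
      · exact absurd h' (pow_ne_zero 3 ht.ne')
      · exact h'
    exact hanti.injOn (Set.mem_Ioi.2 ht) (Set.mem_Ioi.2 ht₀pos) (hht.trans ht₀.symm)
  · intro t ht htlt
    rw [key t ht]
    have : 0 < h t := ht₀ ▸ hanti (Set.mem_Ioi.2 ht) (Set.mem_Ioi.2 ht₀pos) htlt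
    exact mul_pos (pow_pos ht 3) this
  · intro t htgt
    have ht : 0 < t := ht₀pos.trans htgt
    rw [key t ht]
    have : h t < 0 := ht₀ ▸ hanti (Set.mem_Ioi.2 ht₀pos) (Set.mem_Ioi.2 ht) htgt
    exact mul_neg_of_pos_of_neg (pow_pos ht 3) this
end

section
/- Let h : (0,∞) → ℝ be differentiable and suppose that the function t ↦ h'(t)/t³ is nonincreasing on (0,∞). Then for every t > 0 one has h(t) ≤ h(1) + ((t⁴ − 1)/4)·h'(1). -/
open Set

/-- Abstract form of Lemma 5.5: if `t ↦ h'(t)/t³` is nonincreasing on `(0,∞)`,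
then `h(t) ≤ h(1) + ((t⁴ − 1)/4)·h'(1)` for all `t > 0`. -/
theorem stmt7 (h h' : ℝ → ℝ)
    (hderiv : ∀ t ∈ Set.Ioi (0 : ℝ), HasDerivAt h (h' t) t)
    (hmono : AntitoneOn (fun t => h' t / t ^ 3) (Set.Ioi 0)) :
    ∀ t > (0 : ℝ), h t ≤ h 1 + ((t ^ 4 - 1) / 4) * h' 1 := by
  intro t ht
  set g : ℝ → ℝ := fun s => h s - s ^ 4 / 4 * h' 1 with hg
  have hgderiv : ∀ x ∈ Set.Ioi (0:ℝ), HasDerivAt g (h' x - x ^ 3 * h' 1) x := by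
    intro x hx
    have h4 : HasDerivAt (fun s : ℝ => s ^ 4 / 4 * h' 1) (x ^ 3 * h' 1) x := by
      have hp : HasDerivAt (fun s : ℝ => s ^ 4) (4 * x ^ 3) x := by
        simpa using (hasDerivAt_pow 4 x)
      have := (hp.div_const 4).mul_const (h' 1)
      exact this.congr_deriv (by ring)
    exact (hderiv x hx).sub h4
  have key : g t ≤ g 1 := by
    rcases le_total 1 t with h1t | ht1
    · have hsub : Set.Icc (1:ℝ) t ⊆ Set.Ioi 0 := fun x hx =>
        lt_of_lt_of_le one_pos hx.1
      have hanti := antitoneOn_of_deriv_nonpos (convex_Icc 1 t)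
        (fun x hx => ((hgderiv x (hsub hx)).continuousAt.continuousWithinAt))
        (fun x hx => by
          rw [interior_Icc] at hx
          have hx0 : (0:ℝ) < x := lt_trans one_pos hx.1
          exact ((hgderiv x hx0).differentiableAt.differentiableWithinAt))
        (fun x hx => by
          rw [interior_Icc] at hx
          have hx0 : (0:ℝ) < x := lt_trans one_pos hx.1
          rw [(hgderiv x hx0).deriv]
          have hm := hmono (Set.mem_Ioi.2 one_pos) (Set.mem_Ioi.2 hx0) hx.1.le
          simp only [one_pow, div_one] at hm
          have hx3 : (0:ℝ) < x ^ 3 := by positivity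
          have := (div_le_iff₀ hx3).mp hm
          linarith)
      exact hanti (Set.left_mem_Icc.2 h1t) (Set.right_mem_Icc.2 h1t) h1t
    · have hsub : Set.Icc t 1 ⊆ Set.Ioi 0 := fun x hx =>
        lt_of_lt_of_le ht hx.1
      have hmon := monotoneOn_of_deriv_nonneg (convex_Icc t 1)
        (fun x hx => ((hgderiv x (hsub hx)).continuousAt.continuousWithinAt))
        (fun x hx => by
          rw [interior_Icc] at hx
          have hx0 : (0:ℝ) < x := lt_trans ht hx.1
          exact ((hgderiv x hx0).differentiableAt.differentiableWithinAt))
        (fun x hx => by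
          rw [interior_Icc] at hx
          have hx0 : (0:ℝ) < x := lt_trans ht hx.1
          rw [(hgderiv x hx0).deriv]
          have hm := hmono (Set.mem_Ioi.2 hx0) (Set.mem_Ioi.2 one_pos) hx.2.le
          simp only [one_pow, div_one] at hm
          have hx3 : (0:ℝ) < x ^ 3 := by positivity
          have := (le_div_iff₀ hx3).mp hm
          linarith)
      exact hmon (Set.left_mem_Icc.2 ht1) (Set.right_mem_Icc.2 ht1) ht1
  simp only [hg] at key
  linear_combination key
end

section
/- Let V : ℝ² → ℝ be continuously differentiable with inf_{x∈ℝ²} V(x) > 0, and let V_∞ ∈ ℝ be such that V(x) ≤ V_∞ for all x ∈ ℝ² and V(y) → V_∞ as ‖y‖ → ∞. Suppose that for every x ∈ ℝ² the function t ↦ V(tx) − ½⟨∇V(tx), tx⟩ is nondecreasing on (0, ∞), and that V(x) + ½⟨∇V(x), x⟩ ≤ V_∞ for all x ∈ ℝ². Then ⟨∇V(x), x⟩ → 0 as ‖x‖ → ∞, and inf_{ℝ²} V ≤ V(x) − ½⟨∇V(x), x⟩ ≤ V_∞ for all x ∈ ℝ². -/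
open Filter
open scoped InnerProductSpace

section aux

variable (V : E2 → ℝ)

lemma grad_apply (hV : ContDiff ℝ 1 V) (y w : E2) :
    fderiv ℝ V y w = ⟪gradient V y, w⟫_ℝ := by
  rw [gradient]
  rw [show (fderiv ℝ V y : E2 →L[ℝ] ℝ)
      = InnerProductSpace.toDual ℝ E2 ((InnerProductSpace.toDual ℝ E2).symm (fderiv ℝ V y)) by
    simp]
  simp [InnerProductSpace.toDual_apply_apply]

lemma grad_cont (hV : ContDiff ℝ 1 V) : Continuous (gradient V) := by
  have : Continuous (fderiv ℝ V) := hV.continuous_fderiv one_ne_zero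
  exact (LinearIsometryEquiv.continuous _).comp this

lemma hasDerivAt_ray (hV : ContDiff ℝ 1 V) (x : E2) (t : ℝ) :
    HasDerivAt (fun s : ℝ => V (s • x)) ⟪gradient V (t • x), x⟫_ℝ t := by
  have h1 : HasDerivAt (fun s : ℝ => s • x) x t := by
    simpa using (hasDerivAt_id t).smul_const x
  have h2 : HasFDerivAt V (fderiv ℝ V (t • x)) (t • x) :=
    (hV.differentiable one_ne_zero).differentiableAt.hasFDerivAt
  have := h2.comp_hasDerivAt t h1
  rwa [grad_apply V hV] at this

end aux

/-- Claim (1.11): under (V₀), (V₂) and (V₃), one has `⟨∇V(x),x⟩ → 0` as `‖x‖ → ∞` and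
`inf V ≤ V(x) − ½⟨∇V(x),x⟩ ≤ V_∞` for all `x`. -/
theorem stmt14 (V : E2 → ℝ) (hV : ContDiff ℝ 1 V)
    (hinf : 0 < ⨅ x : E2, V x)
    (V_inf : ℝ) (hVle : ∀ x, V x ≤ V_inf)
    (hVlim : Tendsto V (cocompact E2) (nhds V_inf))
    (hmono : ∀ x : E2, MonotoneOn
      (fun t : ℝ => V (t • x) - (1 / 2) * ⟪gradient V (t • x), t • x⟫_ℝ)
      (Set.Ioi 0))
    (hV3 : ∀ x, V x + (1 / 2) * ⟪gradient V x, x⟫_ℝ ≤ V_inf) :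
    Tendsto (fun x : E2 => ⟪gradient V x, x⟫_ℝ) (cocompact E2) (nhds 0) ∧
      ∀ x : E2, (⨅ y : E2, V y) ≤ V x - (1 / 2) * ⟪gradient V x, x⟫_ℝ ∧
        V x - (1 / 2) * ⟪gradient V x, x⟫_ℝ ≤ V_inf := by
  set m := ⨅ y : E2, V y with hm
  -- m is a lower bound for V
  have hbdd : BddBelow (Set.range V) := by
    by_contra hb
    rw [hm, Real.iInf_of_not_bddBelow hb] at hinf
    exact lt_irrefl 0 hinf
  have hmle : ∀ y, m ≤ V y := fun y => ciInf_le hbdd y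
  -- Upper bound: W x ≤ V_inf
  have hupper : ∀ x : E2, V x - (1 / 2) * ⟪gradient V x, x⟫_ℝ ≤ V_inf := by
    intro x
    by_contra hcon
    push_neg at hcon
    set ε := V x - (1 / 2) * ⟪gradient V x, x⟫_ℝ - V_inf with hε
    have hεpos : 0 < ε := sub_pos.mpr hcon
    -- for t ≥ 1, ⟪∇V(tx), x⟫ ≤ -2ε/t
    have key : ∀ t : ℝ, 1 ≤ t → ⟪gradient V (t • x), x⟫_ℝ ≤ -(2 * ε) / t := by
      intro t ht
      have htpos : (0:ℝ) < t := lt_of_lt_of_le one_pos ht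
      have h1 := hmono x (Set.mem_Ioi.mpr one_pos) (Set.mem_Ioi.mpr htpos) ht
      simp only [one_smul] at h1
      have h2 : ⟪gradient V (t • x), t • x⟫_ℝ = t * ⟪gradient V (t • x), x⟫_ℝ :=
        real_inner_smul_right _ _ _
      have h3 : V (t • x) ≤ V_inf := hVle _
      -- h1 : V x - ½⟪∇V x, x⟫ ≤ V(tx) - ½ t ⟪∇V(tx), x⟫
      rw [h2] at h1
      have : (1/2) * (t * ⟪gradient V (t • x), x⟫_ℝ) ≤ -ε := by nlinarith
      rw [div_eq_mul_inv, neg_mul]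
      have hti : 0 < t⁻¹ := inv_pos.mpr htpos
      have htt : t * t⁻¹ = 1 := mul_inv_cancel₀ (ne_of_gt htpos)
      nlinarith
    -- φ(t) = V(tx) + 2ε log t is antitone on Ici 1
    set φ : ℝ → ℝ := fun t => V (t • x) + 2 * ε * Real.log t with hφ
    have hanti : AntitoneOn φ (Set.Ici 1) := by
      apply antitoneOn_of_deriv_nonpos (convex_Ici 1)
      · apply ContinuousOn.add
        · exact ((hV.continuous).comp (continuous_id.smul continuous_const)).continuousOn
        · exact (continuousOn_const.mul (Real.continuousOn_log.mono (by
            intro t ht; simp at ht ⊢; linarith)))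
      · intro t ht
        rw [interior_Ici] at ht
        have htpos : (0:ℝ) < t := lt_trans one_pos ht
        exact ((hasDerivAt_ray V hV x t).add
          ((Real.hasDerivAt_log (ne_of_gt htpos)).const_mul
            (2*ε))).differentiableAt.differentiableWithinAt
      · intro t ht
        rw [interior_Ici] at ht
        have htpos : (0:ℝ) < t := lt_trans one_pos ht
        have hd : HasDerivAt φ (⟪gradient V (t • x), x⟫_ℝ + 2 * ε * t⁻¹) t :=
          (hasDerivAt_ray V hV x t).add
            ((Real.hasDerivAt_log (ne_of_gt htpos)).const_mul (2*ε))
        rw [hd.deriv]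
        have hk := key t (le_of_lt ht)
        rw [div_eq_mul_inv, neg_mul] at hk
        linarith
    -- pick large T
    set T : ℝ := Real.exp ((V x - m) / (2 * ε) + 1) with hT
    have hT1 : 1 ≤ T := by
      rw [hT]
      have : (0:ℝ) ≤ (V x - m) / (2 * ε) + 1 := by
        have : 0 ≤ (V x - m) / (2 * ε) := div_nonneg (by linarith [hmle x]) (by linarith)
        linarith
      calc (1:ℝ) = Real.exp 0 := by simp
        _ ≤ _ := Real.exp_le_exp.mpr this
    have hlog : Real.log T = (V x - m) / (2 * ε) + 1 := Real.log_exp _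
    have h4 := hanti (Set.mem_Ici.mpr le_rfl) (Set.mem_Ici.mpr hT1) hT1
    have h5 : m ≤ V (T • x) := hmle _
    rw [hφ] at h4
    simp only [one_smul, Real.log_one, mul_zero, add_zero] at h4
    rw [hlog] at h4
    have h2e : (0:ℝ) < 2 * ε := by linarith
    have : 2 * ε * ((V x - m) / (2 * ε) + 1) = (V x - m) + 2 * ε := by
      field_simp
    rw [this] at h4
    linarith
  -- Lower bound: m ≤ W x
  have hlower : ∀ x : E2, m ≤ V x - (1 / 2) * ⟪gradient V x, x⟫_ℝ := by
    intro x
    have hcontF : Continuous (fun y : E2 => V y - (1 / 2) * ⟪gradient V y, y⟫_ℝ) := by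
      apply (hV.continuous).sub
      exact continuous_const.mul ((grad_cont V hV).inner continuous_id)
    have htend : Tendsto (fun t : ℝ => V (t • x) - (1 / 2) * ⟪gradient V (t • x), t • x⟫_ℝ)
        (nhdsWithin 0 (Set.Ioi 0)) (nhds (V 0)) := by
      have h1 : Tendsto (fun t : ℝ => t • x) (nhdsWithin 0 (Set.Ioi 0)) (nhds (0 : E2)) := by
        have : Tendsto (fun t : ℝ => t • x) (nhds 0) (nhds ((0:ℝ) • x)) :=
          (continuous_id.smul continuous_const).tendsto 0
        rw [zero_smul] at this
        exact this.mono_left nhdsWithin_le_nhds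
      have := (hcontF.tendsto 0).comp h1
      simpa only [inner_zero_right, mul_zero, sub_zero, Function.comp_def] using this
    have hev : ∀ᶠ t in nhdsWithin (0:ℝ) (Set.Ioi 0),
        (fun t : ℝ => V (t • x) - (1 / 2) * ⟪gradient V (t • x), t • x⟫_ℝ) t ≤
          V x - (1 / 2) * ⟪gradient V x, x⟫_ℝ := by
      filter_upwards [self_mem_nhdsWithin, Ioo_mem_nhdsGT_of_mem (by norm_num : (0:ℝ) ∈ Set.Ico 0 1)] with t ht ht1
      have := hmono x ht (Set.mem_Ioi.mpr one_pos) (le_of_lt ht1.2)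
      simpa using this
    have hne : (nhdsWithin (0:ℝ) (Set.Ioi 0)).NeBot := nhdsGT_neBot 0
    have hV0 : V 0 ≤ V x - (1 / 2) * ⟪gradient V x, x⟫_ℝ :=
      le_of_tendsto htend hev
    exact le_trans (hmle 0) hV0
  refine ⟨?_, fun x => ⟨hlower x, hupper x⟩⟩
  -- Tendsto via squeeze
  have hbound : ∀ x : E2, |⟪gradient V x, x⟫_ℝ| ≤ 2 * (V_inf - V x) := by
    intro x
    have h1 := hV3 x
    have h2 := hupper x
    rw [abs_le]
    constructor <;> nlinarith
  have htend2 : Tendsto (fun x : E2 => 2 * (V_inf - V x)) (cocompact E2) (nhds 0) := by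
    have : Tendsto (fun x : E2 => V_inf - V x) (cocompact E2) (nhds (V_inf - V_inf)) :=
      tendsto_const_nhds.sub hVlim
    rw [sub_self] at this
    simpa using this.const_mul 2
  exact squeeze_zero_norm (fun x => by simpa using hbound x) htend2
end
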